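/- Let H be a real inner product space, E₁ : H → ℝ convex and differentiable with gradient ∇E₁, E₂ : H → ℝ concave and differentiable with gradient ∇E₂, τ > 0, K ≥ 1, and let u⁰, u¹, …, u^K ∈ H satisfy, for every k = 0, 1, …, K−1 with d_t u^{k+1} := (u^{k+1} − u^k)/τ, the relation ⟨d_t u^{k+1}, u^{k+1} − u^k⟩ + ⟨∇E₁(u^{k+1}), u^{k+1} − u^k⟩ + ⟨∇E₂(u^k), u^{k+1} − u^k⟩ = 0. Then with E = E₁ + E₂ the iterates satisfy the unconditional energy stability estimate E(u^K) + τ Σ_{k=0}^{K−1} ‖d_t u^{k+1}‖² ≤ E(u⁰); in particular the energy E(u^k) is non-increasing in k and the corrections d_t u^k tend to zero in the sense that Σ_k τ ‖d_t u^k‖² is bounded by the initial energy excess. -/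

import Mathlib

open Filter Topology

/-- Subgradient inequality for a convex differentiable function. -/
lemma convex_gradient_ineq
    {H : Type*} [NormedAddCommGroup H] [InnerProductSpace ℝ H] [CompleteSpace H]
    (E : H → ℝ) (g : H → H) (hE : ConvexOn ℝ Set.univ E)
    (x y : H) (hg : HasGradientAt E (g x) x) :
    (inner ℝ (g x) (y - x) : ℝ) ≤ E y - E x := by
  set v := y - x with hv
  set φ : ℝ → ℝ := fun t => E (x + t • v) with hφ
  have hline : HasDerivAt (fun t : ℝ => x + t • v) v 0 := by
    simpa using ((hasDerivAt_id (0:ℝ)).smul_const v).const_add x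
  have hφ' : HasDerivAt φ (inner ℝ (g x) v : ℝ) 0 := by
    have hx0 : x + (0:ℝ) • v = x := by simp
    have hF : HasFDerivAt E ((InnerProductSpace.toDual ℝ H) (g x)) (x + (0:ℝ) • v) :=
      hx0.symm ▸ hg.hasFDerivAt
    have := hF.comp_hasDerivAt 0 hline
    simp only [InnerProductSpace.toDual_apply_apply] at this; exact this
  have hslope : Tendsto (slope φ 0) (𝓝[>] 0) (𝓝 (inner ℝ (g x) v : ℝ)) :=
    (hasDerivAt_iff_tendsto_slope.1 hφ').mono_left
      (nhdsWithin_mono _ (fun t ht => ne_of_gt ht))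
  have hbound : ∀ᶠ t in 𝓝[>] (0:ℝ), slope φ 0 t ≤ E y - E x := by
    filter_upwards [Ioc_mem_nhdsGT_of_mem (by norm_num : (0:ℝ) ∈ Set.Ico 0 1)]
      with t ht
    have ht0 : 0 < t := ht.1
    have ht1 : t ≤ 1 := ht.2
    have hconv : φ t ≤ (1 - t) * E x + t * E y := by
      have := hE.2 (Set.mem_univ x) (Set.mem_univ y)
        (by linarith : (0:ℝ) ≤ 1 - t) ht0.le (by ring)
      have hpt : x + t • v = (1 - t) • x + t • y := by
        simp [hv, smul_sub, sub_smul]; abel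
      simpa [φ, hpt, smul_eq_mul] using this
    have hφ0 : φ 0 = E x := by simp [φ]
    rw [slope_def_field, sub_zero, div_le_iff₀ ht0]
    nlinarith [hconv, hφ0]
  exact le_of_tendsto hslope hbound

theorem imex_energy_stability
    {H : Type*} [NormedAddCommGroup H] [InnerProductSpace ℝ H] [CompleteSpace H]
    (E₁ E₂ : H → ℝ) (g₁ g₂ : H → H)
    (hE₁ : ConvexOn ℝ Set.univ E₁) (hg₁ : ∀ x, HasGradientAt E₁ (g₁ x) x)
    (hE₂ : ConcaveOn ℝ Set.univ E₂) (hg₂ : ∀ x, HasGradientAt E₂ (g₂ x) x)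
    (τ : ℝ) (hτ : 0 < τ) (K : ℕ) (hK : 1 ≤ K) (u : ℕ → H)
    (hrel : ∀ k < K,
      (inner ℝ ((1 / τ) • (u (k + 1) - u k)) (u (k + 1) - u k) : ℝ)
        + (inner ℝ (g₁ (u (k + 1))) (u (k + 1) - u k) : ℝ)
        + (inner ℝ (g₂ (u k)) (u (k + 1) - u k) : ℝ) = 0) :
    (E₁ (u K) + E₂ (u K)) +
        τ * ∑ k ∈ Finset.range K, ‖(1 / τ) • (u (k + 1) - u k)‖ ^ 2 ≤ E₁ (u 0) + E₂ (u 0) ∧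
    ∀ k < K, E₁ (u (k + 1)) + E₂ (u (k + 1)) ≤ E₁ (u k) + E₂ (u k) := by
  have key : ∀ k < K,
      (E₁ (u (k+1)) + E₂ (u (k+1))) + τ * ‖(1 / τ) • (u (k + 1) - u k)‖ ^ 2
        ≤ E₁ (u k) + E₂ (u k) := by
    intro k hk
    have h1 : (inner ℝ (g₁ (u (k+1))) (u k - u (k+1)) : ℝ) ≤ E₁ (u k) - E₁ (u (k+1)) :=
      convex_gradient_ineq E₁ g₁ hE₁ _ _ (hg₁ _)
    have h2 : E₂ (u (k+1)) - E₂ (u k) ≤ (inner ℝ (g₂ (u k)) (u (k+1) - u k) : ℝ) := by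
      have hgneg : HasGradientAt (fun x => -E₂ x) (-g₂ (u k)) (u k) := by
        have : HasFDerivAt (fun x => -E₂ x)
            ((InnerProductSpace.toDual ℝ H) (-g₂ (u k))) (u k) := by
          rw [map_neg]; exact (hg₂ (u k)).hasFDerivAt.neg
        simpa using this.hasGradientAt
      have := convex_gradient_ineq (fun x => -E₂ x) (fun x => -g₂ x) hE₂.neg
        (u k) (u (k+1)) hgneg
      simp only [inner_neg_left] at this
      linarith
    have hrel' := hrel k hk
    have hnorm : (inner ℝ ((1 / τ) • (u (k + 1) - u k)) (u (k + 1) - u k) : ℝ)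
        = τ * ‖(1 / τ) • (u (k + 1) - u k)‖ ^ 2 := by
      rw [norm_smul, real_inner_smul_left, real_inner_self_eq_norm_sq]
      simp [mul_pow, abs_of_pos, hτ]
      field_simp
    have h1' : (inner ℝ (g₁ (u (k+1))) (u (k+1) - u k) : ℝ)
        = -(inner ℝ (g₁ (u (k+1))) (u k - u (k+1)) : ℝ) := by
      rw [← inner_neg_right, neg_sub]
    linarith [h1', h2, hrel', hnorm.symm.le, hnorm.le]
  constructor
  · have main : ∀ n, n ≤ K →
        (E₁ (u n) + E₂ (u n)) +
          τ * ∑ k ∈ Finset.range n, ‖(1 / τ) • (u (k + 1) - u k)‖ ^ 2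
          ≤ E₁ (u 0) + E₂ (u 0) := by
      intro n
      induction n with
      | zero => simp
      | succ m ih =>
        intro hm
        have hmK : m < K := hm
        have := ih (Nat.le_of_lt hmK)
        have hkey := key m hmK
        rw [Finset.sum_range_succ]
        nlinarith [this, hkey]
    exact main K le_rfl
  · intro k hk
    have hkey := key k hk
    have : 0 ≤ τ * ‖(1 / τ) • (u (k + 1) - u k)‖ ^ 2 := by positivity
    linarith
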